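/- Let A be a 4×4 symmetric matrix over ℂ whose characteristic polynomial has no multiple root (i.e. A has four distinct eigenvalues). Then for every nonzero eigenvector v of A (Av = μ·v for some μ ∈ ℂ, v ≠ 0), one has vᵀv ≠ 0. -/

import Mathlib

open Matrix Polynomial

private lemma pow_mulVec_eig {A : Matrix (Fin 4) (Fin 4) ℂ} {v : Fin 4 → ℂ} {μ : ℂ}
    (hμ : A *ᵥ v = μ • v) : ∀ n : ℕ, (A ^ n) *ᵥ v = (μ ^ n) • v := by
  intro n
  induction n with
  | zero => simp
  | succ n ih =>
      rw [pow_succ, ← mulVec_mulVec, hμ, mulVec_smul, ih, smul_smul, pow_succ]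
      ring_nf

private lemma aeval_mulVec_eig {A : Matrix (Fin 4) (Fin 4) ℂ} {v : Fin 4 → ℂ} {μ : ℂ}
    (hμ : A *ᵥ v = μ • v) (r : ℂ[X]) : (aeval A r) *ᵥ v = r.eval μ • v := by
  induction r using Polynomial.induction_on' with
  | add p q hp hq => rw [map_add, add_mulVec, hp, hq, eval_add, add_smul]
  | monomial n c =>
      rw [aeval_monomial, eval_monomial, ← Algebra.smul_def, smul_mulVec,
        pow_mulVec_eig hμ, smul_smul]

private lemma aeval_transpose_symm {A : Matrix (Fin 4) (Fin 4) ℂ} (hA : A.IsSymm)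
    (r : ℂ[X]) : (aeval A r)ᵀ = aeval A r := by
  induction r using Polynomial.induction_on' with
  | add p q hp hq => rw [map_add, transpose_add, hp, hq]
  | monomial n c =>
      rw [aeval_monomial, ← Algebra.smul_def, transpose_smul, transpose_pow, hA.eq]

private lemma charpoly_sub_smul_one (A : Matrix (Fin 4) (Fin 4) ℂ) (μ : ℂ) :
    (A - μ • 1).charpoly = A.charpoly.comp (X + C μ) := by
  have h1 : A.charpoly.comp (X + C μ)
      = (aeval (X + C μ : ℂ[X])).toRingHom A.charpoly := by
    simp [comp_eq_aeval]
  rw [h1, Matrix.charpoly, Matrix.charpoly, RingHom.map_det]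
  congr 1
  ext i j
  by_cases h : i = j
  · subst h
    simp [charmatrix_apply_eq, map_sub, Matrix.sub_apply, Matrix.smul_apply, one_apply_eq, C_sub]
    ring
  · simp [charmatrix_apply_ne _ _ _ h, Matrix.sub_apply, Matrix.smul_apply, one_apply_ne h]
-- dimension lemma
private lemma eig_span (A : Matrix (Fin 4) (Fin 4) ℂ)
    (hsq : ∀ α : ℂ, A.charpoly.rootMultiplicity α ≤ 1)
    (v : Fin 4 → ℂ) (hv : v ≠ 0) (μ : ℂ) (hμ : A *ᵥ v = μ • v) (m : ℕ) :
    ∀ u : Fin 4 → ℂ, ((A - μ • 1) ^ m) *ᵥ u = 0 → ∃ c : ℂ, u = c • v := by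
  intro u hu
  set g : Module.End ℂ (Fin 4 → ℂ) := Matrix.toLin' (A - μ • 1) with hg
  have hgpow : ∀ k : ℕ, (g ^ k : Module.End ℂ (Fin 4 → ℂ)) = Matrix.toLin' ((A - μ • 1) ^ k) := by
    intro k
    induction k with
    | zero => simp [Module.End.one_eq_id, Matrix.toLin'_one]
    | succ k ih => rw [pow_succ, pow_succ, Matrix.toLin'_mul, ih]; rfl
  have hgc : g.charpoly = (A - μ • 1).charpoly := by
    rw [← LinearMap.charpoly_toMatrix g (Pi.basisFun ℂ (Fin 4)),
      LinearMap.toMatrix_eq_toMatrix', hg, LinearMap.toMatrix'_toLin']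
  have hfr : Module.finrank ℂ (g.maxGenEigenspace 0) ≤ 1 := by
    rw [LinearMap.finrank_maxGenEigenspace_zero_eq, hgc, charpoly_sub_smul_one,
      ← rootMultiplicity_eq_natTrailingDegree]
    exact hsq μ
  have hvmem : v ∈ g.maxGenEigenspace 0 := by
    rw [Module.End.mem_maxGenEigenspace]
    refine ⟨1, ?_⟩
    simp only [zero_smul, sub_zero, pow_one, hg, Matrix.toLin'_apply]
    rw [sub_mulVec, hμ, smul_mulVec, one_mulVec, sub_self]
  have humem : u ∈ g.maxGenEigenspace 0 := by
    rw [Module.End.mem_maxGenEigenspace]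
    refine ⟨m, ?_⟩
    simp only [zero_smul, sub_zero, hgpow m, Matrix.toLin'_apply, hu]
  obtain ⟨w0, hw0⟩ := finrank_le_one_iff.mp hfr
  obtain ⟨c₀, hc₀⟩ := hw0 ⟨v, hvmem⟩
  obtain ⟨c₁, hc₁⟩ := hw0 ⟨u, humem⟩
  have hc₀0 : c₀ ≠ 0 := by
    rintro rfl
    apply hv
    have := congrArg Subtype.val hc₀
    simpa using this.symm
  refine ⟨c₁ / c₀, ?_⟩
  have h1 := congrArg Subtype.val hc₀
  have h2 := congrArg Subtype.val hc₁
  simp only [Submodule.coe_smul] at h1 h2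
  rw [← h2, ← h1, smul_smul, div_mul_cancel₀ _ hc₀0]

theorem distinct_eigenvalues_eigenvector_nonisotropic (A : Matrix (Fin 4) (Fin 4) ℂ)
    (hA : A.IsSymm) (hsq : ∀ α : ℂ, A.charpoly.rootMultiplicity α ≤ 1)
    (v : Fin 4 → ℂ) (hv : v ≠ 0) (μ : ℂ) (hμ : A *ᵥ v = μ • v) :
    v ⬝ᵥ v ≠ 0 := by
  intro hvv
  classical
  set p := A.charpoly with hp
  have hp0 : p ≠ 0 := A.charpoly_monic.ne_zero
  obtain ⟨q, hq, hndvd⟩ := p.exists_eq_pow_rootMultiplicity_mul_and_not_dvd hp0 μ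
  set m := p.rootMultiplicity μ with hm
  obtain ⟨a, b, hab⟩ := (irreducible_X_sub_C μ).coprime_iff_not_dvd.mpr hndvd
  set S : Matrix (Fin 4) (Fin 4) ℂ := aeval A (X - C μ) with hS
  have hS1 : S = A - μ • 1 := by
    rw [hS, map_sub, aeval_X, aeval_C, Algebra.algebraMap_eq_smul_one]
  have hSv : S *ᵥ v = 0 := by
    rw [hS, aeval_mulVec_eig hμ]; simp
  -- Bezout decomposition of the identity matrix
  have h1 : aeval A a * S + aeval A q * aeval A b = 1 := by
    have h := congrArg (aeval A) hab
    rw [map_add, _root_.map_mul, _root_.map_mul, _root_.map_one] at h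
    rw [hS, ← h, ← _root_.map_mul, ← _root_.map_mul, ← _root_.map_mul, mul_comm q b]
  have key : ∀ x : Fin 4 → ℂ, v ⬝ᵥ x = 0 := by
    intro x
    have hx : x = (aeval A a * S) *ᵥ x + (aeval A q * aeval A b) *ᵥ x := by
      rw [← add_mulVec, h1, one_mulVec]
    rw [hx, dotProduct_add]
    -- first term
    have hterm1 : v ⬝ᵥ ((aeval A a * S) *ᵥ x) = 0 := by
      rw [dotProduct_mulVec, ← mulVec_transpose, transpose_mul, hS,
        aeval_transpose_symm hA, aeval_transpose_symm hA, ← hS,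
        ← mulVec_mulVec, aeval_mulVec_eig hμ, mulVec_smul, hSv]
      simp
    -- second term
    set u : Fin 4 → ℂ := (aeval A q * aeval A b) *ᵥ x with hu
    have hSu : ((A - μ • 1) ^ m) *ᵥ u = 0 := by
      rw [hu, mulVec_mulVec, ← hS1, hS, ← map_pow, ← _root_.map_mul, ← _root_.map_mul,
        ← mul_assoc, ← hq]
      rw [_root_.map_mul, hp, Matrix.aeval_self_charpoly, zero_mul, zero_mulVec]
    obtain ⟨c, hc⟩ := eig_span A hsq v hv μ hμ m u hSu
    rw [hterm1, hc, dotProduct_smul, hvv]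
    simp
  apply hv
  funext i
  simpa using key (Pi.single i 1)
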